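/- For a pure bipartite state the entanglement of purification equals the entanglement entropy: if ρ = |χ⟩⟨χ| for a unit vector χ ∈ ℂ^{n₁} ⊗ ℂ^{n₂}, then E_P(ρ) = S(Tr₂ ρ), the von Neumann entropy of the reduced density matrix on ℂ^{n₁}. -/

import Mathlib

open scoped Kronecker ComplexOrder

/-- A density matrix: positive semidefinite with trace 1. -/
def IsDensityMatrix {d : Type*} [Fintype d] (ρ : Matrix d d ℂ) : Prop :=
  ρ.PosSemidef ∧ ρ.trace = 1

/-- The rank-one outer product `|ψ⟩⟨ψ|` of a vector. -/
noncomputable def outerProd {d : Type*} (ψ : d → ℂ) : Matrix d d ℂ :=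
  Matrix.vecMulVec ψ (star ψ)

/-- Partial trace over the second tensor factor. -/
noncomputable def ptrace₂ {α β : Type*} [Fintype β] (σ : Matrix (α × β) (α × β) ℂ) :
    Matrix α α ℂ :=
  Matrix.of fun i i' => ∑ j, σ (i, j) (i', j)

/-- Partial trace over the first tensor factor. -/
noncomputable def ptrace₁ {α β : Type*} [Fintype α] (σ : Matrix (α × β) (α × β) ℂ) :
    Matrix β β ℂ :=
  Matrix.of fun j j' => ∑ i, σ (i, j) (i, j')

/-- Von Neumann entropy `S(ρ) = -∑ λᵢ log λᵢ` over the eigenvalues of `ρ`. -/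
noncomputable def vnEntropy {d : Type*} [Fintype d] [DecidableEq d] (ρ : Matrix d d ℂ) : ℝ :=
  if h : ρ.IsHermitian then ∑ i, Real.negMulLog (h.eigenvalues i) else 0

/-- Partial trace over the two ancilla factors `ℂ^{m₁} ⊗ ℂ^{m₂}` of a matrix on
`(ℂ^{n₁} ⊗ ℂ^{m₁}) ⊗ (ℂ^{n₂} ⊗ ℂ^{m₂})`, giving a matrix on `ℂ^{n₁} ⊗ ℂ^{n₂}`. -/
noncomputable def ptraceAnc {n₁ m₁ n₂ m₂ : ℕ}
    (σ : Matrix ((Fin n₁ × Fin m₁) × (Fin n₂ × Fin m₂))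
      ((Fin n₁ × Fin m₁) × (Fin n₂ × Fin m₂)) ℂ) :
    Matrix (Fin n₁ × Fin n₂) (Fin n₁ × Fin n₂) ℂ :=
  Matrix.of fun p q => ∑ j₁ : Fin m₁, ∑ j₂ : Fin m₂,
    σ ((p.1, j₁), (p.2, j₂)) ((q.1, j₁), (q.2, j₂))

/-- The entanglement of purification `E_P(ρ)`: the infimum of
`S(Tr_{A₂A'₂} |ψ⟩⟨ψ|)` over all purifications `ψ` of `ρ` in
`(ℂ^{n₁} ⊗ ℂ^{m₁}) ⊗ (ℂ^{n₂} ⊗ ℂ^{m₂})`. -/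
noncomputable def entPurification {n₁ n₂ : ℕ}
    (ρ : Matrix (Fin n₁ × Fin n₂) (Fin n₁ × Fin n₂) ℂ) : ℝ :=
  sInf {x : ℝ | ∃ (m₁ m₂ : ℕ), 1 ≤ m₁ ∧ 1 ≤ m₂ ∧
    ∃ ψ : (Fin n₁ × Fin m₁) × (Fin n₂ × Fin m₂) → ℂ,
      (∑ z, ‖ψ z‖ ^ 2 = 1) ∧ ptraceAnc (outerProd ψ) = ρ ∧
      x = vnEntropy (ptrace₂ (outerProd ψ))}

section Aux

open Polynomial Matrix Finset
set_option linter.unusedSectionVars false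

lemma conj_charpoly {d : Type*} [Fintype d] [DecidableEq d] (W N : Matrix d d ℂ)
    (hW : W * Wᴴ = 1) : (W * N * Wᴴ).charpoly = N.charpoly := by
  have hmap : (W.map C) * (Wᴴ.map C) = 1 := by
    rw [← Matrix.map_mul, hW]; exact Matrix.map_one _ (map_zero _) (map_one _)
  have hdiag : (diagonal fun _ : d => (X : ℂ[X])) = (X : ℂ[X]) • 1 := by
    ext i j; by_cases h : i = j <;> simp [h, Matrix.one_apply]
  have hch : charmatrix (W * N * Wᴴ) = (W.map C) * charmatrix N * (Wᴴ.map C) := by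
    rw [charmatrix, charmatrix, Matrix.mul_sub, Matrix.sub_mul]
    congr 1
    · rw [scalar_apply, hdiag, Matrix.mul_smul, Matrix.smul_mul, Matrix.mul_one, hmap]
    · simp [RingHom.mapMatrix_apply, Matrix.map_mul]
  rw [Matrix.charpoly, Matrix.charpoly, hch, det_mul, det_mul, mul_comm, ← mul_assoc,
    mul_comm (Wᴴ.map C).det, ← det_mul, hmap, det_one, one_mul]

lemma charpoly_diag_real {d : Type*} [Fintype d] [DecidableEq d] (u : d → ℝ) :
    (diagonal fun i => (u i : ℂ)).charpoly = ∏ i, (X - C ((u i : ℂ))) := by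
  have : charmatrix (diagonal fun i => (u i : ℂ)) = diagonal fun i => (X - C ((u i : ℂ))) := by
    ext i j; by_cases h : i = j <;> simp [h, charmatrix_apply, diagonal_apply]
  rw [Matrix.charpoly, this, det_diagonal]

lemma eig_sum_eq {d : Type*} [Fintype d] [DecidableEq d] {A : Matrix d d ℂ}
    (hA : A.IsHermitian) (W : Matrix d d ℂ) (hW : W * Wᴴ = 1) (v : d → ℝ)
    (h : A = W * diagonal (fun i => (v i : ℂ)) * Wᴴ) (f : ℝ → ℝ) :
    ∑ i, f (hA.eigenvalues i) = ∑ i, f (v i) := by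
  have key : ∀ (u : d → ℝ) (W' : Matrix d d ℂ), W' * W'ᴴ = 1 →
      A = W' * diagonal (fun i => (u i : ℂ)) * W'ᴴ →
      A.charpoly = ∏ i, (X - C ((u i : ℂ))) := by
    intro u W' hW' hfac
    rw [hfac, conj_charpoly _ _ hW', charpoly_diag_real]
  have h1 := key v W hW h
  have hU : (hA.eigenvectorUnitary : Matrix d d ℂ) * (hA.eigenvectorUnitary : Matrix d d ℂ)ᴴ = 1 :=
    (Matrix.mem_unitaryGroup_iff).mp hA.eigenvectorUnitary.2
  have h2 := key hA.eigenvalues _ hU hA.spectral_theorem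
  have hprod : ∏ i, (X - C ((hA.eigenvalues i : ℂ))) = ∏ i, (X - C ((v i : ℂ))) := by
    rw [← h1, ← h2]
  have hroots : (Finset.univ.val.map fun i => ((hA.eigenvalues i : ℝ) : ℂ)) =
      Finset.univ.val.map fun i => ((v i : ℝ) : ℂ) := by
    have e1 : ∀ g : d → ℂ, ∏ i, (X - C (g i)) =
        ((Finset.univ.val.map g).map fun a => X - C a).prod := by
      intro g; rw [Multiset.map_map]; rfl
    have := congrArg Polynomial.roots hprod
    rwa [e1, e1, Polynomial.roots_multiset_prod_X_sub_C,
      Polynomial.roots_multiset_prod_X_sub_C] at this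
  have hmult : Finset.univ.val.map hA.eigenvalues = Finset.univ.val.map v := by
    apply Multiset.map_injective Complex.ofReal_injective
    rwa [Multiset.map_map, Multiset.map_map]
  have e2 : ∀ g : d → ℝ, ∑ i, f (g i) = ((Finset.univ.val.map g).map f).sum := by
    intro g; rw [Multiset.map_map]; rfl
  rw [e2, e2, hmult]

lemma trace_eq_sum_eig {d : Type*} [Fintype d] [DecidableEq d] {A : Matrix d d ℂ}
    (hA : A.IsHermitian) : A.trace = ∑ i, (hA.eigenvalues i : ℂ) := by
  conv_lhs => rw [hA.spectral_theorem]
  rw [Unitary.conjStarAlgAut_apply, Matrix.trace_mul_cycle]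
  have : (star (hA.eigenvectorUnitary : Matrix d d ℂ)) * (hA.eigenvectorUnitary : Matrix d d ℂ)
      = 1 := (Matrix.mem_unitaryGroup_iff').mp hA.eigenvectorUnitary.2
  rw [this, one_mul, trace_diagonal]
  rfl

variable {α β : Type*} [Fintype α] [Fintype β]

lemma red_apply (u : α × β → ℂ) (i i' : α) :
    ptrace₂ (outerProd u) i i' = ∑ j, u (i, j) * (starRingEnd ℂ) (u (i', j)) := rfl

lemma red_eq_mul (u : α × β → ℂ) :
    ptrace₂ (outerProd u) = (Matrix.of fun i j => u (i, j)) * (Matrix.of fun i j => u (i, j))ᴴ := by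
  ext i i'
  simp [red_apply, Matrix.mul_apply, conjTranspose_apply, RCLike.star_def]

lemma red_posSemidef (u : α × β → ℂ) : (ptrace₂ (outerProd u)).PosSemidef := by
  rw [red_eq_mul]; exact posSemidef_self_mul_conjTranspose _

lemma red_isHermitian (u : α × β → ℂ) : (ptrace₂ (outerProd u)).IsHermitian :=
  (red_posSemidef u).1

lemma red_trace (u : α × β → ℂ) :
    (ptrace₂ (outerProd u)).trace = ∑ z, u z * (starRingEnd ℂ) (u z) := by
  rw [Matrix.trace]
  simp only [diag_apply, red_apply]
  exact (Fintype.sum_prod_type (f := fun z : α × β => u z * (starRingEnd ℂ) (u z))).symm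

lemma rank_one_factor {ι κ : Type*} [Fintype ι] [Fintype κ] (Ψ : ι → κ → ℂ) (χ : ι → ℂ)
    (hχ : ∑ p, χ p * (starRingEnd ℂ) (χ p) = 1)
    (h : ∀ p q, ∑ j, Ψ p j * (starRingEnd ℂ) (Ψ q j) = χ p * (starRingEnd ℂ) (χ q)) :
    ∃ φ : κ → ℂ, (∑ j, φ j * (starRingEnd ℂ) (φ j) = 1) ∧ ∀ p j, Ψ p j = χ p * φ j := by
  set c : ℂ →+* ℂ := starRingEnd ℂ with hc
  set φ : κ → ℂ := fun j => ∑ p, c (χ p) * Ψ p j with hφdef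
  have hφsum : ∑ j, φ j * c (φ j) = 1 := by
    calc ∑ j, φ j * c (φ j)
        = ∑ j, ∑ p, ∑ q, (c (χ p) * χ q) * (Ψ p j * c (Ψ q j)) := by
          refine Finset.sum_congr rfl fun j _ => ?_
          rw [hφdef, map_sum, Finset.sum_mul_sum]
          refine Finset.sum_congr rfl fun p _ => Finset.sum_congr rfl fun q _ => ?_
          rw [_root_.map_mul]
          simp only [hc, Complex.conj_conj]
          ring
      _ = ∑ p, ∑ q, (c (χ p) * χ q) * ∑ j, (Ψ p j * c (Ψ q j)) := by
          rw [Finset.sum_comm]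
          refine Finset.sum_congr rfl fun p _ => ?_
          rw [Finset.sum_comm]
          refine Finset.sum_congr rfl fun q _ => ?_
          rw [Finset.mul_sum]
      _ = ∑ p, ∑ q, (χ p * c (χ p)) * (χ q * c (χ q)) := by
          refine Finset.sum_congr rfl fun p _ => Finset.sum_congr rfl fun q _ => ?_
          rw [h p q]; ring
      _ = 1 := by rw [← Finset.sum_mul_sum, hχ, one_mul]
  have hcφ : ∀ j, c (φ j) = ∑ p, χ p * c (Ψ p j) := by
    intro j
    rw [hφdef, map_sum]
    refine Finset.sum_congr rfl fun p _ => ?_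
    rw [_root_.map_mul]
    simp only [hc, Complex.conj_conj]
  have hS : ∑ p, ∑ j, (Ψ p j - χ p * φ j) * c (Ψ p j - χ p * φ j) = 0 := by
    have expand : ∀ p j, (Ψ p j - χ p * φ j) * c (Ψ p j - χ p * φ j)
        = Ψ p j * c (Ψ p j) - ((c (χ p) * Ψ p j) * c (φ j) + ((χ p * c (Ψ p j)) * φ j
          - (χ p * c (χ p)) * (φ j * c (φ j)))) := by
      intro p j; rw [map_sub, _root_.map_mul]; ring
    have T1 : ∑ p, ∑ j, Ψ p j * c (Ψ p j) = 1 := by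
      rw [← hχ]; exact Finset.sum_congr rfl fun p _ => h p p
    have T2 : ∑ p, ∑ j, (c (χ p) * Ψ p j) * c (φ j) = 1 := by
      rw [Finset.sum_comm, ← hφsum]
      refine Finset.sum_congr rfl fun j _ => ?_
      rw [← Finset.sum_mul]
    have T3 : ∑ p, ∑ j, (χ p * c (Ψ p j)) * φ j = 1 := by
      rw [Finset.sum_comm, ← hφsum]
      refine Finset.sum_congr rfl fun j _ => ?_
      rw [← Finset.sum_mul, ← hcφ j, mul_comm]
    have T4 : ∑ p, ∑ j, (χ p * c (χ p)) * (φ j * c (φ j)) = 1 := by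
      rw [← Finset.sum_mul_sum, hχ, hφsum, one_mul]
    simp only [expand, Finset.sum_sub_distrib, Finset.sum_add_distrib]
    rw [T1, T2, T3, T4]; ring
  have hreal : ∑ p, ∑ j, Complex.normSq (Ψ p j - χ p * φ j) = 0 := by
    simp only [hc, Complex.mul_conj] at hS
    exact_mod_cast hS
  refine ⟨φ, hφsum, fun p j => ?_⟩
  have h1 := (Finset.sum_eq_zero_iff_of_nonneg
    (fun p _ => Finset.sum_nonneg fun j _ => Complex.normSq_nonneg _)).mp hreal p (mem_univ p)
  have h2 := (Finset.sum_eq_zero_iff_of_nonneg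
    (fun j _ => Complex.normSq_nonneg _)).mp h1 j (mem_univ j)
  exact sub_eq_zero.mp (Complex.normSq_eq_zero.mp h2)

lemma red_factor {α₁ β₁ α₂ β₂ : Type*} [Fintype α₂] [Fintype β₂]
    (χ : α₁ × α₂ → ℂ) (φ : β₁ × β₂ → ℂ) (ψ : (α₁ × β₁) × (α₂ × β₂) → ℂ)
    (hψ : ∀ p j, ψ ((p.1, j.1), (p.2, j.2)) = χ p * φ j) :
    ptrace₂ (outerProd ψ) = (ptrace₂ (outerProd χ)) ⊗ₖ (ptrace₂ (outerProd φ)) := by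
  ext ⟨i, j₁⟩ ⟨i', j₁'⟩
  simp only [red_apply, kroneckerMap_apply]
  rw [Fintype.sum_prod_type, Finset.sum_mul_sum]
  refine Finset.sum_congr rfl fun k _ => Finset.sum_congr rfl fun j₂ _ => ?_
  rw [show ((i, j₁), (k, j₂)) = (((i, k).1, (j₁, j₂).1), ((i, k).2, (j₁, j₂).2)) from rfl,
    hψ (i, k) (j₁, j₂), hψ (i', k) (j₁', j₂), _root_.map_mul]
  ring

variable [DecidableEq α] [DecidableEq β]

lemma kron_conjTranspose (A : Matrix α α ℂ) (B : Matrix β β ℂ) :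
    (A ⊗ₖ B)ᴴ = Aᴴ ⊗ₖ Bᴴ := by
  ext ⟨i, j⟩ ⟨i', j'⟩
  simp [conjTranspose_apply, mul_comm]

lemma trace_one_real {d : Type*} [Fintype d] [DecidableEq d] {A : Matrix d d ℂ}
    (hA : A.IsHermitian) (ht : A.trace = 1) : ∑ i, hA.eigenvalues i = 1 := by
  have h := trace_eq_sum_eig hA
  rw [ht] at h
  exact_mod_cast h.symm

lemma vnEntropy_nonneg {d : Type*} [Fintype d] [DecidableEq d] {A : Matrix d d ℂ}
    (hA : A.PosSemidef) (ht : A.trace = 1) : 0 ≤ vnEntropy A := by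
  rw [vnEntropy, dif_pos hA.1]
  refine Finset.sum_nonneg fun i _ => Real.negMulLog_nonneg (hA.eigenvalues_nonneg i) ?_
  calc hA.1.eigenvalues i ≤ ∑ j, hA.1.eigenvalues j :=
        Finset.single_le_sum (fun j _ => hA.eigenvalues_nonneg j) (mem_univ i)
    _ = 1 := trace_one_real hA.1 ht

lemma vnEntropy_of_unique {d : Type*} [Fintype d] [DecidableEq d] [Unique d]
    {A : Matrix d d ℂ} (hA : A.IsHermitian) (ht : A.trace = 1) : vnEntropy A = 0 := by
  rw [vnEntropy, dif_pos hA]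
  have h := trace_one_real hA ht
  rw [Fintype.sum_unique] at h ⊢
  rw [h, Real.negMulLog_one]

lemma vnEntropy_kron (A : Matrix α α ℂ) (B : Matrix β β ℂ) (hA : A.PosSemidef)
    (hB : B.PosSemidef) (hAt : A.trace = 1) (hBt : B.trace = 1) :
    vnEntropy (A ⊗ₖ B) = vnEntropy A + vnEntropy B := by
  set a := hA.1.eigenvalues with ha
  set b := hB.1.eigenvalues with hb
  set U := (hA.1.eigenvectorUnitary : Matrix α α ℂ) with hU'
  set V := (hB.1.eigenvectorUnitary : Matrix β β ℂ) with hV'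
  have hU : U * Uᴴ = 1 := (Matrix.mem_unitaryGroup_iff).mp hA.1.eigenvectorUnitary.2
  have hV : V * Vᴴ = 1 := (Matrix.mem_unitaryGroup_iff).mp hB.1.eigenvectorUnitary.2
  have hfacA : A = U * diagonal (fun i => (a i : ℂ)) * Uᴴ := hA.1.spectral_theorem
  have hfacB : B = V * diagonal (fun j => (b j : ℂ)) * Vᴴ := hB.1.spectral_theorem
  have hD : (diagonal fun p : α × β => ((a p.1 * b p.2 : ℝ) : ℂ))
      = (diagonal fun i => (a i : ℂ)) ⊗ₖ (diagonal fun j => (b j : ℂ)) := by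
    rw [diagonal_kronecker_diagonal]
    congr 1
    funext p
    push_cast
    rfl
  have hfacM : A ⊗ₖ B = (U ⊗ₖ V) * diagonal (fun p : α × β => ((a p.1 * b p.2 : ℝ) : ℂ))
      * (U ⊗ₖ V)ᴴ := by
    rw [hD, kron_conjTranspose, ← mul_kronecker_mul, ← mul_kronecker_mul, ← hfacA, ← hfacB]
  have hW : (U ⊗ₖ V) * (U ⊗ₖ V)ᴴ = 1 := by
    rw [kron_conjTranspose, ← mul_kronecker_mul, hU, hV, one_kronecker_one]
  have hM : (A ⊗ₖ B).IsHermitian := by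
    rw [hfacM]
    refine Matrix.isHermitian_mul_mul_conjTranspose _ ?_
    show _ᴴ = _
    rw [diagonal_conjTranspose]
    have hsf : (star fun p : α × β => ((a p.1 * b p.2 : ℝ) : ℂ))
        = fun p : α × β => ((a p.1 * b p.2 : ℝ) : ℂ) := by
      funext p
      rw [Pi.star_apply, Complex.star_def, Complex.conj_ofReal]
    rw [hsf]
  have ha1 : ∑ i, a i = 1 := trace_one_real hA.1 hAt
  have hb1 : ∑ j, b j = 1 := trace_one_real hB.1 hBt
  have hsum := eig_sum_eq hM (U ⊗ₖ V) hW _ hfacM Real.negMulLog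
  rw [vnEntropy, dif_pos hM, hsum, vnEntropy, dif_pos hA.1, vnEntropy, dif_pos hB.1]
  rw [Fintype.sum_prod_type]
  calc ∑ i, ∑ j, Real.negMulLog (a i * b j)
      = ∑ i, ∑ j, (b j * Real.negMulLog (a i) + a i * Real.negMulLog (b j)) := by
        refine Finset.sum_congr rfl fun i _ => Finset.sum_congr rfl fun j _ => ?_
        exact Real.negMulLog_mul (a i) (b j)
    _ = ∑ i, ((∑ j, b j) * Real.negMulLog (a i) + a i * ∑ j, Real.negMulLog (b j)) := by
        refine Finset.sum_congr rfl fun i _ => ?_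
        rw [Finset.sum_add_distrib, ← Finset.sum_mul, ← Finset.mul_sum]
    _ = ∑ i, Real.negMulLog (a i) + ∑ i, Real.negMulLog (b i) := by
        rw [Finset.sum_add_distrib]
        congr 1
        · refine Finset.sum_congr rfl fun i _ => ?_; rw [hb1, one_mul]
        · rw [← Finset.sum_mul, ha1, one_mul]

end Aux

set_option maxHeartbeats 2000000 in
open Finset in
/-- For a pure bipartite state the entanglement of purification equals the
entanglement entropy of the reduced density matrix. -/
theorem entPurification_of_pure {n₁ n₂ : ℕ}
    (χ : Fin n₁ × Fin n₂ → ℂ) (hχ : ∑ z, ‖χ z‖ ^ 2 = 1)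
    (ρ : Matrix (Fin n₁ × Fin n₂) (Fin n₁ × Fin n₂) ℂ) (hρ : ρ = outerProd χ) :
    entPurification ρ = vnEntropy (ptrace₂ ρ) := by
  subst hρ
  have hχc : ∑ z, χ z * (starRingEnd ℂ) (χ z) = 1 := by
    have h1 : ∑ z, χ z * (starRingEnd ℂ) (χ z) = ((∑ z, ‖χ z‖ ^ 2 : ℝ) : ℂ) := by
      rw [Complex.ofReal_sum]
      refine Finset.sum_congr rfl fun z _ => ?_
      rw [Complex.mul_conj]
      exact congrArg _ (by rw [Complex.normSq_eq_norm_sq])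
    rw [h1, hχ, Complex.ofReal_one]
  have hApsd : (ptrace₂ (outerProd χ)).PosSemidef := red_posSemidef χ
  have hAtr : (ptrace₂ (outerProd χ)).trace = 1 := (red_trace χ).trans hχc
  have main : ∀ (m₁ m₂ : ℕ) (φ : Fin m₁ × Fin m₂ → ℂ)
      (ψ : (Fin n₁ × Fin m₁) × (Fin n₂ × Fin m₂) → ℂ),
      (∑ j, φ j * (starRingEnd ℂ) (φ j) = 1) →
      (∀ p j, ψ ((p.1, j.1), (p.2, j.2)) = χ p * φ j) →
      vnEntropy (ptrace₂ (outerProd ψ))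
        = vnEntropy (ptrace₂ (outerProd χ)) + vnEntropy (ptrace₂ (outerProd φ)) := by
    intro m₁ m₂ φ ψ hφ hfact
    rw [red_factor χ φ ψ hfact]
    exact vnEntropy_kron _ _ hApsd (red_posSemidef φ) hAtr ((red_trace φ).trans hφ)
  set S : Set ℝ := {x : ℝ | ∃ (m₁ m₂ : ℕ), 1 ≤ m₁ ∧ 1 ≤ m₂ ∧
    ∃ ψ : (Fin n₁ × Fin m₁) × (Fin n₂ × Fin m₂) → ℂ,
      (∑ z, ‖ψ z‖ ^ 2 = 1) ∧ ptraceAnc (outerProd ψ) = outerProd χ ∧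
      x = vnEntropy (ptrace₂ (outerProd ψ))} with hS
  have hmem : vnEntropy (ptrace₂ (outerProd χ)) ∈ S := by
    refine ⟨1, 1, le_refl 1, le_refl 1, fun z => χ (z.1.1, z.2.1), ?_, ?_, ?_⟩
    · rw [Fintype.sum_prod_type, ← hχ, Fintype.sum_prod_type]
      simp [Fintype.sum_prod_type, Fin.sum_univ_one]
    · ext p q
      simp [ptraceAnc, outerProd, Matrix.vecMulVec_apply]
    · have hφ : ∑ j : Fin 1 × Fin 1, (1 : ℂ) * (starRingEnd ℂ) 1 = 1 := by simp
      have hf : ∀ (p : Fin n₁ × Fin n₂) (j : Fin 1 × Fin 1),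
          (fun z : (Fin n₁ × Fin 1) × (Fin n₂ × Fin 1) => χ (z.1.1, z.2.1))
            ((p.1, j.1), (p.2, j.2)) = χ p * 1 := by intro p j; simp
      rw [main 1 1 (fun _ => (1 : ℂ))
        (fun z : (Fin n₁ × Fin 1) × (Fin n₂ × Fin 1) => χ (z.1.1, z.2.1)) hφ hf]
      have h0 : vnEntropy (ptrace₂ (outerProd (fun _ : Fin 1 × Fin 1 => (1 : ℂ)))) = 0 :=
        vnEntropy_of_unique (red_isHermitian _) ((red_trace _).trans (by simp))
      rw [h0, add_zero]
  have hlb : ∀ x ∈ S, vnEntropy (ptrace₂ (outerProd χ)) ≤ x := by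
    rintro x ⟨m₁, m₂, -, -, ψ, -, hpt, rfl⟩
    have hq : ∀ p q : Fin n₁ × Fin n₂, ∑ j : Fin m₁ × Fin m₂,
        ψ ((p.1, j.1), (p.2, j.2)) * (starRingEnd ℂ) (ψ ((q.1, j.1), (q.2, j.2)))
        = χ p * (starRingEnd ℂ) (χ q) := by
      intro p q
      have h2 := congrFun (congrFun hpt p) q
      rw [Fintype.sum_prod_type]
      exact h2
    obtain ⟨φ, hφ1, hfact⟩ :=
      rank_one_factor (fun (p : Fin n₁ × Fin n₂) (j : Fin m₁ × Fin m₂) => ψ ((p.1, j.1), (p.2, j.2))) χ hχc hq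
    rw [main m₁ m₂ φ ψ hφ1 hfact]
    have := vnEntropy_nonneg (red_posSemidef φ) ((red_trace φ).trans hφ1)
    linarith
  show sInf S = _
  exact le_antisymm (csInf_le ⟨_, fun x hx => hlb x hx⟩ hmem) (le_csInf ⟨_, hmem⟩ hlb)
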